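/- Let R be an integral domain and let G be a group acting on R by ring automorphisms such that the action is locally finite (i.e., the orbit of every element of R under G is finite). If R is a locally pqr domain — that is, for every prime ideal p of R there exists an element t of R such that the canonical map from R to the localization R_p realizes R_p as the localization of R away from t (at the multiplicative set of powers of t) — then the fixed ring R^G = {r ∈ R : σ(r) = r for all σ ∈ G} is also a locally pqr domain, i.e., for every prime ideal q of R^G there exists s ∈ R^G such that the localization (R^G)_q is the localization of R^G away from s. -/

import Mathlib

/-- The fixed subring `R^G` of a group `G` acting on a commutative ring `R`
by ring automorphisms. -/
def fixedSubring (G R : Type*) [Group G] [CommRing R] [MulSemiringAction G R] : Subring R where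
  carrier := {r : R | ∀ g : G, g • r = r}
  mul_mem' := fun ha hb g => by rw [smul_mul', ha g, hb g]
  one_mem' := fun g => smul_one g
  add_mem' := fun ha hb g => by rw [smul_add, ha g, hb g]
  zero_mem' := fun g => smul_zero g
  neg_mem' := fun ha g => by rw [smul_neg, ha g]

/-- An integral domain `R` is *locally pqr* if for every prime ideal `p` of `R`,
the localization `R_p` is the localization of `R` away from a single element `t ∈ R`. -/
def IsLocallyPqr (R : Type*) [CommRing R] [IsDomain R] : Prop :=
  ∀ (p : Ideal R) [p.IsPrime], ∃ t : R, IsLocalization.Away t (Localization.AtPrime p)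

section Aux

open Polynomial

variable {R : Type*} [CommRing R] {G : Type*} [Group G] [MulSemiringAction G R]

/-- The coefficients of the orbit polynomial `∏_{x ∈ orbit t} (X - x)` are `G`-fixed. -/
theorem orbPoly_coeff_mem (hlf : ∀ r : R, (MulAction.orbit G r).Finite) (t : R) (i : ℕ) :
    (∏ x ∈ (hlf t).toFinset, (X - C x)).coeff i ∈ fixedSubring G R := by
  classical
  intro g
  have himg : (hlf t).toFinset.image (fun x => g • x) = (hlf t).toFinset := by
    ext y
    simp only [Finset.mem_image, Set.Finite.mem_toFinset]
    constructor
    · rintro ⟨x, hx, rfl⟩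
      rw [← MulAction.smul_orbit g t]
      exact Set.smul_mem_smul_set hx
    · intro hy
      rw [← MulAction.smul_orbit g t] at hy
      obtain ⟨x, hx, rfl⟩ := hy
      exact ⟨x, hx, rfl⟩
  have hmap : Polynomial.map (MulSemiringAction.toRingHom G R g)
      (∏ x ∈ (hlf t).toFinset, (X - C x)) = ∏ x ∈ (hlf t).toFinset, (X - C x) := by
    rw [Polynomial.map_prod]
    simp only [Polynomial.map_sub, Polynomial.map_X, Polynomial.map_C]
    calc ∏ x ∈ (hlf t).toFinset, (X - C (MulSemiringAction.toRingHom G R g x))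
        = ∏ y ∈ (hlf t).toFinset.image (fun x => g • x), (X - C y) := by
          rw [Finset.prod_image (fun a _ b _ h => MulAction.injective g h)]
          rfl
      _ = ∏ x ∈ (hlf t).toFinset, (X - C x) := by rw [himg]
  calc g • (∏ x ∈ (hlf t).toFinset, (X - C x)).coeff i
      = (Polynomial.map (MulSemiringAction.toRingHom G R g)
          (∏ x ∈ (hlf t).toFinset, (X - C x))).coeff i := by rw [Polynomial.coeff_map]; rfl
    _ = (∏ x ∈ (hlf t).toFinset, (X - C x)).coeff i := by rw [hmap]

/-- `R` is integral over the fixed subring when the action is locally finite. -/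
theorem fixed_isIntegral (hlf : ∀ r : R, (MulAction.orbit G r).Finite) :
    Algebra.IsIntegral ↥(fixedSubring G R) R := by
  classical
  constructor
  intro r
  have hco : (↑(∏ x ∈ (hlf r).toFinset, (X - C x)).coeffs : Set R) ⊆ ↑(fixedSubring G R) := by
    intro c hc
    simp only [Finset.coe_image, Polynomial.coeffs, Finset.mem_coe, Finset.mem_image] at hc
    obtain ⟨n, -, rfl⟩ := hc
    exact orbPoly_coeff_mem hlf r n
  refine ⟨(∏ x ∈ (hlf r).toFinset, (X - C x)).toSubring _ hco, ?_, ?_⟩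
  · rw [Polynomial.monic_toSubring]
    exact Polynomial.monic_prod_of_monic _ _ fun x _ => Polynomial.monic_X_sub_C x
  · have hm : Polynomial.map ((fixedSubring G R).subtype)
        ((∏ x ∈ (hlf r).toFinset, (X - C x)).toSubring _ hco)
        = ∏ x ∈ (hlf r).toFinset, (X - C x) := Polynomial.map_toSubring _ _ _
    show Polynomial.eval₂ (algebraMap ↥(fixedSubring G R) R) r _ = 0
    rw [Polynomial.eval₂_eq_eval_map]
    have : Polynomial.map (algebraMap ↥(fixedSubring G R) R) _ = _ := hm
    rw [this, Polynomial.eval_prod]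
    refine Finset.prod_eq_zero ((hlf r).mem_toFinset.mpr (MulAction.mem_orbit_self r)) ?_
    simp

/-- Extract the key divisibility facts from `IsLocalization.Away`. -/
theorem away_facts {R : Type*} [CommRing R] [IsDomain R] (p : Ideal R) [p.IsPrime] (t : R)
    (ht : IsLocalization.Away t (Localization.AtPrime p)) :
    t ∉ p ∧ ∀ u : R, u ∉ p → ∃ (n : ℕ) (a : R), t ^ n = u * a := by
  haveI := ht
  constructor
  · have h1 : IsUnit (algebraMap R (Localization.AtPrime p) t) :=
      IsLocalization.map_units (M := Submonoid.powers t) _ ⟨t, Submonoid.mem_powers t⟩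
    exact (IsLocalization.AtPrime.isUnit_to_map_iff (Localization.AtPrime p) p t).mp h1
  · intro u hu
    have h1 : IsUnit (algebraMap R (Localization.AtPrime p) u) :=
      IsLocalization.map_units (M := p.primeCompl) _ ⟨u, hu⟩
    obtain ⟨w, hw⟩ := h1
    obtain ⟨⟨a, m⟩, hs⟩ := IsLocalization.surj (M := Submonoid.powers t)
      (((w⁻¹ : (Localization.AtPrime p)ˣ) : Localization.AtPrime p))
    obtain ⟨n, hn⟩ := m.2
    refine ⟨n, a, IsLocalization.injective (Localization.AtPrime p)
      p.primeCompl_le_nonZeroDivisors ?_⟩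
    rw [map_mul, ← hw, show t ^ n = (↑m : R) from hn, ← hs, ← mul_assoc,
      Units.mul_inv, one_mul]

end Aux

/-- If `G` acts locally finitely on an integral domain `R` and `R` is a locally pqr
domain, then so is the fixed ring `R^G`. -/
theorem isLocallyPqr_fixedSubring (R : Type*) [CommRing R] [IsDomain R]
    (G : Type*) [Group G] [MulSemiringAction G R]
    (hlf : ∀ r : R, (MulAction.orbit G r).Finite)
    (hR : IsLocallyPqr R) :
    IsLocallyPqr ↥(fixedSubring G R) := by
  classical
  haveI hint : Algebra.IsIntegral ↥(fixedSubring G R) R := fixed_isIntegral hlf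
  intro q hq
  have hbot : ∀ (J : Ideal ↥(fixedSubring G R)),
      (⊥ : Ideal R).comap (algebraMap ↥(fixedSubring G R) R) ≤ J := by
    intro J x hx
    have h0 : (algebraMap ↥(fixedSubring G R) R) x = 0 := Ideal.mem_bot.mp (Ideal.mem_comap.mp hx)
    have hx0 : x = 0 := Subtype.ext h0
    rw [hx0]; exact J.zero_mem
  obtain ⟨p, -, hp, hpq⟩ := Ideal.exists_ideal_over_prime_of_isIntegral q ⊥ (hbot q)
  haveI := hp
  obtain ⟨t, ht⟩ := hR p
  obtain ⟨htp, hdvd⟩ := away_facts p t ht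
  have hc3 : ∀ (p'' : Ideal R), p''.IsPrime → ¬ p'' ≤ p → t ∈ p'' := by
    intro p'' hp'' hle
    obtain ⟨u, hu1, hu2⟩ := SetLike.not_le_iff_exists.mp hle
    obtain ⟨n, a, hna⟩ := hdvd u hu2
    exact hp''.mem_of_pow_mem n (hna ▸ p''.mul_mem_right a hu1)
  set T := (hlf t).toFinset with hT
  set F : Polynomial R := ∏ x ∈ T, (Polynomial.X - Polynomial.C x) with hF
  have hFm : F.Monic := Polynomial.monic_prod_of_monic _ _ fun x _ => Polynomial.monic_X_sub_C x
  have hdeg : F.natDegree = T.card := by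
    rw [hF, Polynomial.natDegree_prod _ _ (fun x _ => Polynomial.X_sub_C_ne_zero x)]
    simp
  have hex : ∃ i, i < F.natDegree ∧ F.coeff i ∉ p := by
    by_contra hcon
    push_neg at hcon
    apply htp
    have hev : F.eval t = 0 := by
      rw [hF, Polynomial.eval_prod]
      exact Finset.prod_eq_zero ((hlf t).mem_toFinset.mpr (MulAction.mem_orbit_self t)) (by simp)
    have h2 : (0:R) = ∑ j ∈ Finset.range (F.natDegree + 1), F.coeff j * t ^ j := by
      rw [← Polynomial.eval_eq_sum_range, hev]
    rw [Finset.sum_range_succ, hFm.coeff_natDegree, one_mul] at h2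
    have h3 : t ^ F.natDegree ∈ p := by
      rw [eq_neg_of_add_eq_zero_right h2.symm]
      exact p.neg_mem (Ideal.sum_mem _ fun j hj =>
        p.mul_mem_right _ (hcon j (Finset.mem_range.mp hj)))
    exact hp.mem_of_pow_mem _ h3
  obtain ⟨i, hin, hci⟩ := hex
  have hciS : F.coeff i ∈ fixedSubring G R := orbPoly_coeff_mem hlf t i
  set s : ↥(fixedSubring G R) := ⟨F.coeff i, hciS⟩ with hsdef
  have hsq : s ∉ q := by
    intro h
    rw [← hpq, Ideal.mem_comap] at h
    exact hci h
  have hkey : ∀ (p' : Ideal R), p'.IsPrime →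
      ¬ p'.comap (algebraMap ↥(fixedSubring G R) R) ≤ q → F.coeff i ∈ p' := by
    intro p' hp' hle
    haveI := hp'
    have horb : ∀ x ∈ T, x ∈ p' := by
      intro x hx
      obtain ⟨g, rfl⟩ := (hlf t).mem_toFinset.mp hx
      have hp''p : (p'.comap (MulSemiringAction.toRingHom G R g)).IsPrime :=
        Ideal.IsPrime.comap _
      have htp'' : t ∈ p'.comap (MulSemiringAction.toRingHom G R g) := by
        apply hc3 _ hp''p
        intro hle2
        apply hle
        intro y hy
        have h1 : (↑y : R) ∈ p'.comap (MulSemiringAction.toRingHom G R g) := by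
          rw [Ideal.mem_comap]
          show g • (↑y : R) ∈ p'
          rw [y.2 g]
          exact Ideal.mem_comap.mp hy
        rw [← hpq, Ideal.mem_comap]
        exact hle2 h1
      exact Ideal.mem_comap.mp htp''
    have hmapF : F.map (Ideal.Quotient.mk p') = Polynomial.X ^ T.card := by
      have hfac : ∀ x ∈ T, Polynomial.map (Ideal.Quotient.mk p') (Polynomial.X - Polynomial.C x)
          = (Polynomial.X : Polynomial (R ⧸ p')) := by
        intro x hx
        rw [Polynomial.map_sub, Polynomial.map_X, Polynomial.map_C,
          Ideal.Quotient.eq_zero_iff_mem.mpr (horb x hx), Polynomial.C_0, sub_zero]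
      rw [hF, Polynomial.map_prod, Finset.prod_congr rfl hfac, Finset.prod_const]
    have hz : Ideal.Quotient.mk p' (F.coeff i) = 0 := by
      have h4 : (F.map (Ideal.Quotient.mk p')).coeff i = Ideal.Quotient.mk p' (F.coeff i) :=
        Polynomial.coeff_map _ i
      rw [hmapF, Polynomial.coeff_X_pow] at h4
      have hne : i ≠ T.card := by rw [← hdeg]; exact Nat.ne_of_lt hin
      rw [← h4, if_neg hne]
    exact Ideal.Quotient.eq_zero_iff_mem.mp hz
  have hdvdS : ∀ u : ↥(fixedSubring G R), u ∉ q →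
      ∃ (m : ℕ) (v : ↥(fixedSubring G R)), s ^ m = u * v := by
    intro u hu
    have hrad : s ∈ (Ideal.span {u}).radical := by
      rw [Ideal.radical_eq_sInf]
      refine Submodule.mem_sInf.mpr ?_
      rintro q' ⟨hq'span, hq'prime⟩
      haveI := hq'prime
      obtain ⟨p', -, hp', hp'q⟩ := Ideal.exists_ideal_over_prime_of_isIntegral q' ⊥ (hbot q')
      have hcoeff : F.coeff i ∈ p' := by
        refine hkey p' hp' ?_
        rw [hp'q]
        intro hle
        exact hu (hle (hq'span (Ideal.subset_span rfl)))
      rw [← hp'q]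
      exact Ideal.mem_comap.mpr hcoeff
    obtain ⟨m, hm⟩ := Ideal.mem_radical_iff.mp hrad
    obtain ⟨v, hv⟩ := Ideal.mem_span_singleton'.mp hm
    exact ⟨m, v, by rw [← hv, mul_comm]⟩
  refine ⟨s, ?_⟩
  constructor
  constructor
  · rintro ⟨y, k, rfl⟩
    exact IsLocalization.map_units (M := q.primeCompl) _
      ⟨s ^ k, fun h => hsq (hq.mem_of_pow_mem k h)⟩
  · intro z
    obtain ⟨⟨a, u⟩, hz⟩ := IsLocalization.surj (M := q.primeCompl) z
    obtain ⟨m, v, hmv⟩ := hdvdS u u.2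
    refine ⟨(a * v, ⟨s ^ m, m, rfl⟩), ?_⟩
    simp only at hz ⊢
    rw [hmv, map_mul, ← mul_assoc, hz, ← map_mul]
  · intro x y hxy
    have hxy' : x = y := IsLocalization.injective (Localization.AtPrime q)
      q.primeCompl_le_nonZeroDivisors hxy
    exact ⟨1, by rw [hxy']⟩
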